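/- Let G be a group, A ≤ G a torsion-free abelian subgroup of finite index n, and z a nontrivial element of Z(G) ∩ A. Then the image of z in the abelianization G^{ab} = G/[G,G] has infinite order. -/

import Mathlib

theorem infinite_order_in_abelianization {G : Type*} [Group G] (A : Subgroup G)
    (hfin : A.index ≠ 0)
    (hab : ∀ a b : G, a ∈ A → b ∈ A → a * b = b * a)
    (htf : ∀ a : G, a ∈ A → IsOfFinOrder a → a = 1)
    (z : G) (hz : z ∈ Subgroup.center G) (hzA : z ∈ A) (hz1 : z ≠ 1) :
    ¬ IsOfFinOrder (Abelianization.of z) := by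
  intro hfo
  haveI : A.FiniteIndex := ⟨hfin⟩
  letI : CommGroup A := { A.toGroup with mul_comm := fun a b => Subtype.ext (hab a b a.2 b.2) }
  have key : ∀ (k : ℕ) (g₀ : G), g₀⁻¹ * z ^ k * g₀ ∈ A → g₀⁻¹ * z ^ k * g₀ = z ^ k := by
    intro k g₀ _
    have hc : g₀ * z ^ k = z ^ k * g₀ :=
      (Subgroup.mem_center_iff.mp (Subgroup.pow_mem _ hz k) g₀)
    rw [mul_assoc, ← hc, ← mul_assoc, inv_mul_cancel, one_mul]
  set τ : G →* A := MonoidHom.transfer (MonoidHom.id A)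
  have hτz : τ z = ⟨z ^ A.index, MonoidHom.transfer_eq_pow_aux z key⟩ :=
    MonoidHom.transfer_eq_pow (MonoidHom.id A) z key
  -- factor τ through the abelianization
  have hlift : Abelianization.lift τ (Abelianization.of z) = τ z :=
    Abelianization.lift_apply_of τ z
  have h1 : IsOfFinOrder (τ z) := by
    rw [← hlift]; exact (Abelianization.lift τ).isOfFinOrder hfo
  have h2 : IsOfFinOrder (z ^ A.index) := by
    rw [hτz] at h1
    obtain ⟨n, hn, hpow⟩ := isOfFinOrder_iff_pow_eq_one.mp h1
    refine isOfFinOrder_iff_pow_eq_one.mpr ⟨n, hn, ?_⟩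
    have := congrArg (Subtype.val) hpow
    simpa using this
  have h3 : z ^ A.index = 1 := htf _ (Subgroup.pow_mem _ hzA _) h2
  have h4 : IsOfFinOrder z :=
    isOfFinOrder_iff_pow_eq_one.mpr ⟨A.index, Nat.pos_of_ne_zero hfin, h3⟩
  exact hz1 (htf z hzA h4)
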